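/- Let q > 2, Λ₀ > 0, n ∈ ℕ, δ ∈ (0, Λ₀/2), and let (γ_k) be a sequence of arclength-parametrized generic planar immersions, each with exactly n transverse double points and Λ(γ_k) ≥ Λ₀, converging in C¹ to a generic immersion γ with exactly n transverse double points. Then TP_{q,δ}(γ) ≤ liminf_{k→∞} TP_{q,δ}(γ_k). -/

import Mathlib

open MeasureTheory Set
open scoped ENNReal

noncomputable section

abbrev E2 := EuclideanSpace ℝ (Fin 2)

/-- Periodic distance on `ℝ/ℤ`. -/
def pdist (x y : ℝ) : ℝ := ⨅ k : ℤ, |x - y + k|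

/-- The set of self-intersection parameter pairs of `γ` (in the fundamental domain). -/
def Sset (γ : ℝ → E2) : Set (ℝ × ℝ) :=
  {p | p.1 ∈ Ico (0 : ℝ) 1 ∧ p.2 ∈ Ico (0 : ℝ) 1 ∧ p.1 < p.2 ∧ γ p.1 = γ p.2}

/-- The truncation region `Y_δ(γ)`: pairs of parameters which lie (in periodic distance)
within `δ` of a self-intersection pair. -/
def Ydel (δ : ℝ) (γ : ℝ → E2) : Set (ℝ × ℝ) :=
  {p | ∃ uv ∈ Sset γ,
    (pdist p.1 uv.1 < δ ∧ pdist p.2 uv.2 < δ) ∨ (pdist p.1 uv.2 < δ ∧ pdist p.2 uv.1 < δ)}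

/-- The tangent-point integrand `(2 dist(ℓ(x), γ(y)) / |γ(x)-γ(y)|²)^q` of an
arclength-parametrized curve. -/
def tpInt (q : ℝ) (γ : ℝ → E2) (p : ℝ × ℝ) : ℝ≥0∞ :=
  ENNReal.ofReal
    ((2 * Metric.infDist (γ p.2) {y | ∃ c : ℝ, y = γ p.1 + c • deriv γ p.1} /
        ‖γ p.1 - γ p.2‖ ^ 2) ^ q)

/-- The truncated tangent-point energy `TP_{q,δ}`. -/
def TP (q δ : ℝ) (γ : ℝ → E2) : ℝ≥0∞ :=
  ∫⁻ p in (Ico (0 : ℝ) 1 ×ˢ Ico (0 : ℝ) 1) \ Ydel δ γ, tpInt q γ p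

/-- An arclength parametrized generic closed planar immersion with exactly `n`
transverse double points. -/
def Generic (n : ℕ) (γ : ℝ → E2) : Prop :=
  (∀ t, γ (t + 1) = γ t) ∧ ContDiff ℝ 1 γ ∧ (∀ t, ‖deriv γ t‖ = 1) ∧
    (Sset γ).Finite ∧ (Sset γ).ncard = n ∧
    ∀ p ∈ Sset γ, LinearIndependent ℝ ![deriv γ p.1, deriv γ p.2]

/-- Minimal periodic distance `Λ₀` between distinct self-intersection parameters. -/
def SepBy (Λ₀ : ℝ) (γ : ℝ → E2) : Prop :=
  ∀ p ∈ Sset γ, ∀ p' ∈ Sset γ, ∀ a ∈ ({p.1, p.2} : Set ℝ), ∀ b ∈ ({p'.1, p'.2} : Set ℝ),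
    a ≠ b → Λ₀ ≤ pdist a b


lemma pdist_bdd (x y : ℝ) : BddBelow (Set.range fun k : ℤ => |x - y + k|) :=
  ⟨0, by rintro _ ⟨k, rfl⟩; exact abs_nonneg _⟩

lemma pdist_le (x y : ℝ) (k : ℤ) : pdist x y ≤ |x - y + k| := ciInf_le (pdist_bdd x y) k

lemma pdist_nonneg' (x y : ℝ) : 0 ≤ pdist x y := le_ciInf fun _ => abs_nonneg _

lemma pdist_self (x : ℝ) : pdist x x = 0 :=
  le_antisymm (by simpa using pdist_le x x 0) (pdist_nonneg' x x)

lemma pdist_one_zero : pdist (1:ℝ) 0 = 0 :=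
  le_antisymm (by simpa using pdist_le 1 0 (-1)) (pdist_nonneg' _ _)

lemma pdist_zero_one : pdist (0:ℝ) 1 = 0 :=
  le_antisymm (by simpa using pdist_le 0 1 1) (pdist_nonneg' _ _)

lemma pdist_triangle (x y z : ℝ) : pdist x z ≤ pdist x y + pdist y z := by
  have h : ∀ j k : ℤ, pdist x z ≤ |x - y + j| + |y - z + k| := by
    intro j k
    refine (pdist_le x z (j + k)).trans ?_
    have he : x - z + ((j : ℝ) + (k : ℝ)) = (x - y + j) + (y - z + k) := by ring
    calc |x - z + ((j + k : ℤ) : ℝ)| = |(x - y + j) + (y - z + k)| := by push_cast; rw [he]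
      _ ≤ _ := abs_add_le _ _
  have h2 : ∀ j : ℤ, pdist x z - |x - y + j| ≤ pdist y z :=
    fun j => le_ciInf fun k => by linarith [h j k]
  have h3 : pdist x z - pdist y z ≤ pdist x y := le_ciInf fun j => by linarith [h2 j]
  linarith

lemma pdist_lip (x y x' y' : ℝ) : pdist x y ≤ pdist x' y' + (|x - x'| + |y - y'|) := by
  have h : ∀ k : ℤ, pdist x y ≤ |x' - y' + k| + (|x - x'| + |y - y'|) := by
    intro k
    refine (pdist_le x y k).trans ?_
    have he : x - y + (k : ℝ) = ((x' - y' + k) + (x - x')) + (y' - y) := by ring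
    rw [he]
    calc |((x' - y' + k) + (x - x')) + (y' - y)|
        ≤ |(x' - y' + k) + (x - x')| + |y' - y| := abs_add_le _ _
      _ ≤ (|x' - y' + k| + |x - x'|) + |y' - y| := by gcongr; exact abs_add_le _ _
      _ = |x' - y' + k| + (|x - x'| + |y - y'|) := by rw [abs_sub_comm y' y]; ring
  have h2 : pdist x y - (|x - x'| + |y - y'|) ≤ pdist x' y' :=
    le_ciInf fun k => by linarith [h k]
  linarith

lemma continuous_pdist : Continuous fun p : ℝ × ℝ => pdist p.1 p.2 := by
  rw [Metric.continuous_iff]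
  intro b ε hε
  refine ⟨ε/2, by positivity, fun a hab => ?_⟩
  have h1 := pdist_lip a.1 a.2 b.1 b.2
  have h2 := pdist_lip b.1 b.2 a.1 a.2
  have d1 : |a.1 - b.1| ≤ dist a b := by
    rw [← Real.dist_eq]; rw [Prod.dist_eq]; exact le_max_left _ _
  have d2 : |a.2 - b.2| ≤ dist a b := by
    rw [← Real.dist_eq]; rw [Prod.dist_eq]; exact le_max_right _ _
  have d1' : |b.1 - a.1| ≤ dist a b := by rw [abs_sub_comm]; exact d1
  have d2' : |b.2 - a.2| ≤ dist a b := by rw [abs_sub_comm]; exact d2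
  rw [Real.dist_eq, abs_lt]
  constructor <;> nlinarith

lemma pdist_eq_round (x y : ℝ) : pdist x y = |x - y + round (y - x)| := by
  refine le_antisymm (pdist_le x y _) (le_ciInf fun k => ?_)
  have hyx : y - x = -(x - y) := by ring
  set t := x - y with ht
  rw [hyx]
  set k0 : ℤ := round (-t) with hk0
  have h0 : |t + (k0 : ℝ)| ≤ 1/2 := by
    have habs := abs_sub_round (-t)
    have he : t + (k0 : ℝ) = -((-t) - round (-t)) := by rw [hk0]; ring
    rw [he, abs_neg]; exact habs
  by_cases hk : k = k0
  · rw [hk]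
  · have h1 : (1:ℤ) ≤ |k - k0| := Int.one_le_abs (sub_ne_zero.mpr hk)
    have h1' : (1:ℝ) ≤ |(k:ℝ) - (k0:ℝ)| := by exact_mod_cast h1
    have h2 : |(k:ℝ) - (k0:ℝ)| ≤ |t + k| + |t + k0| := by
      have he : (k:ℝ) - (k0:ℝ) = (t + k) - (t + k0) := by ring
      rw [he]
      exact abs_sub _ _
    linarith

lemma pdist_level_countable (v c : ℝ) : {x : ℝ | pdist x v = c}.Countable := by
  have hsub : {x : ℝ | pdist x v = c} ⊆ ⋃ k : ℤ, ({v - k + c, v - k - c} : Set ℝ) := by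
    intro x hx
    have h := pdist_eq_round x v
    have hc0 : 0 ≤ c := hx ▸ pdist_nonneg' x v
    rw [hx] at h
    rcases (abs_eq hc0).mp h.symm with h' | h'
    · exact Set.mem_iUnion.mpr ⟨round (v - x), Or.inl (by linarith)⟩
    · exact Set.mem_iUnion.mpr ⟨round (v - x), Or.inr (by simp only [Set.mem_singleton_iff]; linarith)⟩
  exact Set.Countable.mono hsub (Set.countable_iUnion fun k => (Set.toFinite _).countable)

lemma pdist_level_null_fst (v c : ℝ) : volume {p : ℝ × ℝ | pdist p.1 v = c} = 0 := by
  have he : {p : ℝ × ℝ | pdist p.1 v = c} = {x : ℝ | pdist x v = c} ×ˢ (Set.univ : Set ℝ) := by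
    ext p; simp [Set.mem_prod]
  rw [he, Measure.volume_eq_prod, Measure.prod_prod,
    (pdist_level_countable v c).measure_zero, zero_mul]

lemma pdist_level_null_snd (v c : ℝ) : volume {p : ℝ × ℝ | pdist p.2 v = c} = 0 := by
  have he : {p : ℝ × ℝ | pdist p.2 v = c} = (Set.univ : Set ℝ) ×ˢ {x : ℝ | pdist x v = c} := by
    ext p; simp [Set.mem_prod]
  rw [he, Measure.volume_eq_prod, Measure.prod_prod,
    (pdist_level_countable v c).measure_zero, mul_zero]

lemma infDist_line (a v x : E2) (hv : ‖v‖ = 1) :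
    Metric.infDist x {y : E2 | ∃ c : ℝ, y = a + c • v} =
      ‖(x - a) - (inner ℝ (x - a) v : ℝ) • v‖ := by
  set w := x - a with hw
  set c0 : ℝ := inner ℝ w v with hc0
  have hmem : a + c0 • v ∈ {y : E2 | ∃ c : ℝ, y = a + c • v} := ⟨c0, rfl⟩
  refine le_antisymm ?_ ?_
  · refine (Metric.infDist_le_dist_of_mem hmem).trans_eq ?_
    rw [dist_eq_norm]
    congr 1
    rw [hw, sub_add_eq_sub_sub]
  · rw [Metric.infDist_eq_iInf]
    have : Nonempty {y : E2 // y ∈ {y : E2 | ∃ c : ℝ, y = a + c • v}} := ⟨⟨_, hmem⟩⟩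
    refine le_ciInf fun y => ?_
    obtain ⟨c, hc⟩ := y.2
    rw [dist_eq_norm, hc, sub_add_eq_sub_sub, ← hw]
    have hy : w - c • v = (w - c0 • v) + (c0 - c) • v := by
      rw [sub_smul]; abel
    rw [hy]
    have hperp : (inner ℝ (w - c0 • v) ((c0 - c) • v) : ℝ) = 0 := by
      rw [real_inner_smul_right, inner_sub_left, real_inner_smul_left,
        real_inner_self_eq_norm_sq, hv]
      simp [hc0]
    have hsq := norm_add_sq_real (w - c0 • v) ((c0 - c) • v)
    rw [hperp] at hsq
    nlinarith [norm_nonneg (w - c0 • v), norm_nonneg ((w - c0 • v) + (c0 - c) • v),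
      sq_nonneg (‖(c0 - c) • v‖)]

lemma tpInt_eq (q : ℝ) (γ : ℝ → E2) (hunit : ∀ t, ‖deriv γ t‖ = 1) (p : ℝ × ℝ) :
    tpInt q γ p = ENNReal.ofReal
      ((2 * ‖(γ p.2 - γ p.1) - (inner ℝ (γ p.2 - γ p.1) (deriv γ p.1) : ℝ) • deriv γ p.1‖ /
        ‖γ p.1 - γ p.2‖ ^ 2) ^ q) := by
  rw [tpInt, infDist_line _ _ _ (hunit p.1)]

lemma tpInt_measurable (q : ℝ) (hq : 0 ≤ q) (γ : ℝ → E2) (hγ : ContDiff ℝ 1 γ)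
    (hunit : ∀ t, ‖deriv γ t‖ = 1) : Measurable (tpInt q γ) := by
  have hrw : tpInt q γ = fun p : ℝ × ℝ => ENNReal.ofReal
      ((2 * ‖(γ p.2 - γ p.1) - (inner ℝ (γ p.2 - γ p.1) (deriv γ p.1) : ℝ) • deriv γ p.1‖ /
        ‖γ p.1 - γ p.2‖ ^ 2) ^ q) := funext (tpInt_eq q γ hunit)
  rw [hrw]
  have hcγ : Continuous γ := hγ.continuous
  have hcd : Continuous (deriv γ) := hγ.continuous_deriv le_rfl
  have hc1 : Continuous fun p : ℝ × ℝ => γ p.2 - γ p.1 :=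
    (hcγ.comp continuous_snd).sub (hcγ.comp continuous_fst)
  have hcv : Continuous fun p : ℝ × ℝ => deriv γ p.1 := hcd.comp continuous_fst
  have hL : Continuous fun p : ℝ × ℝ =>
      ‖(γ p.2 - γ p.1) - (inner ℝ (γ p.2 - γ p.1) (deriv γ p.1) : ℝ) • deriv γ p.1‖ :=
    (hc1.sub ((Continuous.inner (𝕜 := ℝ) hc1 hcv).smul hcv)).norm
  have hD : Continuous fun p : ℝ × ℝ => ‖γ p.1 - γ p.2‖ ^ 2 :=
    (((hcγ.comp continuous_fst).sub (hcγ.comp continuous_snd)).norm).pow 2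
  have hdiv : Measurable fun p : ℝ × ℝ =>
      2 * ‖(γ p.2 - γ p.1) - (inner ℝ (γ p.2 - γ p.1) (deriv γ p.1) : ℝ) • deriv γ p.1‖ /
        ‖γ p.1 - γ p.2‖ ^ 2 :=
    ((hL.measurable).const_mul 2).div hD.measurable
  have hrpow : Continuous fun x : ℝ => x ^ q :=
    continuous_iff_continuousAt.mpr fun x => Real.continuousAt_rpow_const x q (Or.inr hq)
  exact ((hrpow.measurable.comp hdiv)).ennreal_ofReal

lemma Ydel_isOpen (δ : ℝ) (γ : ℝ → E2) : IsOpen (Ydel δ γ) := by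
  have he : Ydel δ γ = ⋃ uv ∈ Sset γ,
      (({p : ℝ × ℝ | pdist p.1 uv.1 < δ} ∩ {p | pdist p.2 uv.2 < δ}) ∪
       ({p : ℝ × ℝ | pdist p.1 uv.2 < δ} ∩ {p | pdist p.2 uv.1 < δ})) := by
    apply Set.Subset.antisymm
    · rintro p ⟨uv, h1, h2⟩
      refine Set.mem_biUnion h1 ?_
      rcases h2 with ⟨a, b⟩ | ⟨a, b⟩
      exacts [Or.inl ⟨a, b⟩, Or.inr ⟨a, b⟩]
    · intro p hp
      obtain ⟨uv, h1, h2⟩ := Set.mem_iUnion₂.mp hp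
      refine ⟨uv, h1, ?_⟩
      rcases h2 with ⟨a, b⟩ | ⟨a, b⟩
      exacts [Or.inl ⟨a, b⟩, Or.inr ⟨a, b⟩]
  rw [he]
  refine isOpen_biUnion fun uv _ => ?_
  have key : ∀ c : ℝ, Continuous fun x : ℝ => pdist x c := fun c =>
    continuous_pdist.comp (continuous_id.prodMk continuous_const)
  have c1 : Continuous fun p : ℝ × ℝ => pdist p.1 uv.1 := (key uv.1).comp continuous_fst
  have c2 : Continuous fun p : ℝ × ℝ => pdist p.2 uv.2 := (key uv.2).comp continuous_snd
  have c3 : Continuous fun p : ℝ × ℝ => pdist p.1 uv.2 := (key uv.2).comp continuous_fst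
  have c4 : Continuous fun p : ℝ × ℝ => pdist p.2 uv.1 := (key uv.1).comp continuous_snd
  exact ((isOpen_lt c1 continuous_const).inter (isOpen_lt c2 continuous_const)).union
    ((isOpen_lt c3 continuous_const).inter (isOpen_lt c4 continuous_const))

/-- Lower semicontinuity of the truncated tangent-point energy along `C¹`-convergent
sequences of generic immersions with uniformly separated self-intersections. -/
theorem stmt18 (q Λ₀ δ : ℝ) (n : ℕ) (hq : 2 < q) (hΛ : 0 < Λ₀)
    (hδ : 0 < δ) (hδΛ : δ < Λ₀ / 2)
    (Γs : ℕ → ℝ → E2) (γ : ℝ → E2)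
    (hgenk : ∀ k, Generic n (Γs k)) (hsep : ∀ k, SepBy Λ₀ (Γs k))
    (hgen : Generic n γ)
    (hconv : TendstoUniformly Γs γ Filter.atTop)
    (hconv' : TendstoUniformly (fun k => deriv (Γs k)) (deriv γ) Filter.atTop) :
    TP q δ γ ≤ Filter.atTop.liminf fun k => TP q δ (Γs k) := by
  classical
  obtain ⟨hper, hsm, hunit, hfin, -, -⟩ := hgen
  have hunitk : ∀ k t, ‖deriv (Γs k) t‖ = 1 := fun k => (hgenk k).2.2.1
  have hq0 : (0:ℝ) < q := by linarith
  set D : Set (ℝ × ℝ) := Ico (0:ℝ) 1 ×ˢ Ico (0:ℝ) 1 with hDdef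
  have hcγ : Continuous γ := hsm.continuous
  -- uniform convergence along subsequences evaluated at varying points
  have key : ∀ (m : ℕ → ℕ) (x : ℕ → ℝ) (ℓ : ℝ), Filter.Tendsto m Filter.atTop Filter.atTop →
      Filter.Tendsto x Filter.atTop (nhds ℓ) →
      Filter.Tendsto (fun i => Γs (m i) (x i)) Filter.atTop (nhds (γ ℓ)) := by
    intro m x ℓ hmt hx
    rw [Metric.tendsto_atTop]
    intro ε hε
    have h1 : Filter.Tendsto (fun i => γ (x i)) Filter.atTop (nhds (γ ℓ)) :=
      (hcγ.tendsto ℓ).comp hx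
    have h2 : ∀ᶠ i in Filter.atTop, dist (γ (x i)) (γ ℓ) < ε/2 :=
      (Metric.tendsto_nhds.mp h1) (ε/2) (by positivity)
    have h3 : ∀ᶠ i in Filter.atTop, ∀ z, dist (γ z) (Γs (m i) z) < ε/2 :=
      hmt.eventually ((Metric.tendstoUniformly_iff.mp hconv) (ε/2) (by positivity))
    obtain ⟨N, hN⟩ := Filter.eventually_atTop.mp (h2.and h3)
    refine ⟨N, fun i hi => ?_⟩
    obtain ⟨hN1, hN2⟩ := hN i hi
    have := dist_triangle (Γs (m i) (x i)) (γ (x i)) (γ ℓ)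
    have h4 := hN2 (x i)
    rw [dist_comm (γ (x i)) (Γs (m i) (x i))] at h4
    linarith
  -- convergence of self-intersection sets
  have hsconv : ∀ ε : ℝ, 0 < ε → ∀ᶠ k in Filter.atTop, ∀ s ∈ Sset (Γs k), ∃ s' ∈ Sset γ,
      (pdist s.1 s'.1 < ε ∧ pdist s.2 s'.2 < ε) ∨
      (pdist s.1 s'.2 < ε ∧ pdist s.2 s'.1 < ε) := by
    intro ε hε
    by_contra hcon
    have hfreq : ∃ᶠ k in Filter.atTop, ∃ s ∈ Sset (Γs k), ∀ s' ∈ Sset γ,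
        ¬((pdist s.1 s'.1 < ε ∧ pdist s.2 s'.2 < ε) ∨
          (pdist s.1 s'.2 < ε ∧ pdist s.2 s'.1 < ε)) := by
      rw [Filter.not_eventually] at hcon
      refine hcon.mono fun k hk => ?_
      push_neg at hk
      obtain ⟨sx, hsx, hfar⟩ := hk
      refine ⟨sx, hsx, fun s' hs' => ?_⟩
      have h := hfar s' hs'
      rintro (⟨a, b⟩ | ⟨a, b⟩)
      · exact absurd b (not_lt.mpr (h.1 a))
      · exact absurd b (not_lt.mpr (h.2 a))
    obtain ⟨φ, hφ, hφP⟩ := Filter.extraction_of_frequently_atTop hfreq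
    choose s hsS hsfar using hφP
    have hsc : ∀ i, s i ∈ (Icc (0:ℝ) 1 ×ˢ Icc (0:ℝ) 1) := fun i =>
      ⟨Ico_subset_Icc_self (hsS i).1, Ico_subset_Icc_self (hsS i).2.1⟩
    obtain ⟨ℓ, hℓmem, ψ, hψ, hψt⟩ := (isCompact_Icc.prod isCompact_Icc).tendsto_subseq hsc
    have hℓ1 : ℓ.1 ∈ Icc (0:ℝ) 1 := hℓmem.1
    have hℓ2 : ℓ.2 ∈ Icc (0:ℝ) 1 := hℓmem.2
    have hmt : Filter.Tendsto (fun i => φ (ψ i)) Filter.atTop Filter.atTop :=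
      (hφ.comp hψ).tendsto_atTop
    have hx1 : Filter.Tendsto (fun i => (s (ψ i)).1) Filter.atTop (nhds ℓ.1) :=
      (continuous_fst.tendsto ℓ).comp hψt
    have hx2 : Filter.Tendsto (fun i => (s (ψ i)).2) Filter.atTop (nhds ℓ.2) :=
      (continuous_snd.tendsto ℓ).comp hψt
    have h1 : Filter.Tendsto (fun i => Γs (φ (ψ i)) ((s (ψ i)).1)) Filter.atTop (nhds (γ ℓ.1)) :=
      key _ _ _ hmt hx1
    have h2 : Filter.Tendsto (fun i => Γs (φ (ψ i)) ((s (ψ i)).2)) Filter.atTop (nhds (γ ℓ.2)) :=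
      key _ _ _ hmt hx2
    have hγeq : γ ℓ.1 = γ ℓ.2 :=
      tendsto_nhds_unique (h1.congr fun i => (hsS (ψ i)).2.2.2) h2
    have hΛb : ∀ i, Λ₀ ≤ pdist (s (ψ i)).1 (s (ψ i)).2 := fun i =>
      hsep (φ (ψ i)) _ (hsS (ψ i)) _ (hsS (ψ i)) _ (Set.mem_insert _ _)
        _ (Set.mem_insert_of_mem _ rfl) (ne_of_lt (hsS (ψ i)).2.2.1)
    have hpdl : Filter.Tendsto (fun i => pdist (s (ψ i)).1 (s (ψ i)).2) Filter.atTop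
        (nhds (pdist ℓ.1 ℓ.2)) := (continuous_pdist.tendsto ℓ).comp hψt
    have hΛℓ : Λ₀ ≤ pdist ℓ.1 ℓ.2 := ge_of_tendsto' hpdl hΛb
    have c1 : Filter.Tendsto (fun i => pdist (s (ψ i)).1 ℓ.1) Filter.atTop (nhds 0) := by
      have := (continuous_pdist.tendsto (ℓ.1, ℓ.1)).comp (hx1.prodMk_nhds tendsto_const_nhds)
      rwa [pdist_self] at this
    rcases lt_or_eq_of_le hℓ2.2 with hlt2 | heq2
    · -- interior case
      have hne12 : ℓ.1 ≠ ℓ.2 := fun h => by rw [h, pdist_self] at hΛℓ; linarith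
      have hle12 : ℓ.1 ≤ ℓ.2 :=
        le_of_tendsto_of_tendsto' hx1 hx2 fun i => le_of_lt (hsS (ψ i)).2.2.1
      have hmemγ : ℓ ∈ Sset γ :=
        ⟨⟨hℓ1.1, lt_of_le_of_lt hle12 hlt2⟩, ⟨hℓ2.1, hlt2⟩, lt_of_le_of_ne hle12 hne12, hγeq⟩
      have c2 : Filter.Tendsto (fun i => pdist (s (ψ i)).2 ℓ.2) Filter.atTop (nhds 0) := by
        have := (continuous_pdist.tendsto (ℓ.2, ℓ.2)).comp (hx2.prodMk_nhds tendsto_const_nhds)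
        rwa [pdist_self] at this
      obtain ⟨i, hi1, hi2⟩ := ((c1.eventually_lt_const hε).and (c2.eventually_lt_const hε)).exists
      exact hsfar (ψ i) ℓ hmemγ (Or.inl ⟨hi1, hi2⟩)
    · -- boundary case ℓ.2 = 1
      have hpd1 : Λ₀ ≤ pdist ℓ.1 1 := by rw [heq2] at hΛℓ; exact hΛℓ
      have hne0 : ℓ.1 ≠ 0 := fun h => by rw [h, pdist_zero_one] at hpd1; linarith
      have hne1 : ℓ.1 ≠ 1 := fun h => by rw [h, pdist_self] at hpd1; linarith
      have h01 : 0 < ℓ.1 := lt_of_le_of_ne hℓ1.1 (Ne.symm hne0)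
      have h11 : ℓ.1 < 1 := lt_of_le_of_ne hℓ1.2 hne1
      have hγ01 : γ 0 = γ ℓ.1 := by
        have hp := hper 0
        rw [zero_add] at hp
        calc γ 0 = γ 1 := hp.symm
          _ = γ ℓ.2 := by rw [heq2]
          _ = γ ℓ.1 := hγeq.symm
      have hmemγ : ((0:ℝ), ℓ.1) ∈ Sset γ :=
        ⟨⟨le_refl 0, one_pos⟩, ⟨hℓ1.1, h11⟩, h01, hγ01⟩
      have c2 : Filter.Tendsto (fun i => pdist (s (ψ i)).2 0) Filter.atTop (nhds 0) := by
        have := (continuous_pdist.tendsto (ℓ.2, 0)).comp (hx2.prodMk_nhds tendsto_const_nhds)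
        rw [heq2, pdist_one_zero] at this
        exact this
      obtain ⟨i, hi1, hi2⟩ := ((c1.eventually_lt_const hε).and (c2.eventually_lt_const hε)).exists
      exact hsfar (ψ i) ((0:ℝ), ℓ.1) hmemγ (Or.inr ⟨hi1, hi2⟩)
  -- null exceptional set
  set N : Set (ℝ × ℝ) := ⋃ s' ∈ Sset γ,
      ({p : ℝ × ℝ | pdist p.1 s'.1 = δ} ∪ {p : ℝ × ℝ | pdist p.2 s'.2 = δ} ∪
       {p : ℝ × ℝ | pdist p.1 s'.2 = δ} ∪ {p : ℝ × ℝ | pdist p.2 s'.1 = δ}) with hNdef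
  have hNnull : volume N = 0 := by
    refine (measure_biUnion_null_iff hfin.countable).mpr fun s' _ => ?_
    refine measure_union_null (measure_union_null (measure_union_null ?_ ?_) ?_) ?_
    exacts [pdist_level_null_fst _ _, pdist_level_null_snd _ _,
      pdist_level_null_fst _ _, pdist_level_null_snd _ _]
  have hNae : ∀ᵐ p : ℝ × ℝ, p ∉ N := measure_eq_zero_iff_ae_notMem.mp hNnull
  -- a.e. pointwise liminf bound
  have hae : ∀ᵐ p : ℝ × ℝ, (D \ Ydel δ γ).indicator (tpInt q γ) p ≤
      Filter.liminf (fun k => ((D \ Ydel δ (Γs k)).indicator (tpInt q (Γs k))) p)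
        Filter.atTop := by
    filter_upwards [hNae] with p hpN
    by_cases hpD : p ∈ D \ Ydel δ γ
    swap
    · rw [Set.indicator_of_notMem hpD]; exact zero_le
    rw [Set.indicator_of_mem hpD]
    by_cases hpe : γ p.1 = γ p.2
    · have h0 : tpInt q γ p = 0 := by
        rw [tpInt]
        have hmem : γ p.2 ∈ {y : E2 | ∃ c : ℝ, y = γ p.1 + c • deriv γ p.1} :=
          ⟨0, by simp [hpe]⟩
        rw [Metric.infDist_zero_of_mem hmem, mul_zero, zero_div,
          Real.zero_rpow (ne_of_gt hq0), ENNReal.ofReal_zero]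
      rw [h0]; exact zero_le
    -- margin extraction
    have hmargin : ∃ ε : ℝ, 0 < ε ∧ ∀ s' ∈ Sset γ,
        (δ + 2*ε ≤ pdist p.1 s'.1 ∨ δ + 2*ε ≤ pdist p.2 s'.2) ∧
        (δ + 2*ε ≤ pdist p.1 s'.2 ∨ δ + 2*ε ≤ pdist p.2 s'.1) := by
      have hstrict : ∀ s' ∈ Sset γ, δ < min (max (pdist p.1 s'.1) (pdist p.2 s'.2))
          (max (pdist p.1 s'.2) (pdist p.2 s'.1)) := by
        intro s' hs'
        have h1 : ¬((pdist p.1 s'.1 < δ ∧ pdist p.2 s'.2 < δ) ∨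
            (pdist p.1 s'.2 < δ ∧ pdist p.2 s'.1 < δ)) := fun h => hpD.2 ⟨s', hs', h⟩
        have emem : (pdist p.1 s'.1 = δ ∨ pdist p.2 s'.2 = δ ∨
            pdist p.1 s'.2 = δ ∨ pdist p.2 s'.1 = δ) → p ∈ N := by
          intro h
          refine Set.mem_biUnion hs' ?_
          simp only [Set.mem_union, Set.mem_setOf_eq]
          tauto
        have e1 : pdist p.1 s'.1 ≠ δ := fun h => hpN (emem (Or.inl h))
        have e2 : pdist p.2 s'.2 ≠ δ := fun h => hpN (emem (Or.inr (Or.inl h)))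
        have e3 : pdist p.1 s'.2 ≠ δ := fun h => hpN (emem (Or.inr (Or.inr (Or.inl h))))
        have e4 : pdist p.2 s'.1 ≠ δ := fun h => hpN (emem (Or.inr (Or.inr (Or.inr h))))
        have d1 : δ < max (pdist p.1 s'.1) (pdist p.2 s'.2) := by
          rcases le_or_gt δ (pdist p.1 s'.1) with h | h
          · exact lt_max_iff.mpr (Or.inl (lt_of_le_of_ne h (Ne.symm e1)))
          · have h' : δ ≤ pdist p.2 s'.2 := by
              by_contra hc
              push_neg at hc
              exact h1 (Or.inl ⟨h, hc⟩)
            exact lt_max_iff.mpr (Or.inr (lt_of_le_of_ne h' (Ne.symm e2)))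
        have d2 : δ < max (pdist p.1 s'.2) (pdist p.2 s'.1) := by
          rcases le_or_gt δ (pdist p.1 s'.2) with h | h
          · exact lt_max_iff.mpr (Or.inl (lt_of_le_of_ne h (Ne.symm e3)))
          · have h' : δ ≤ pdist p.2 s'.1 := by
              by_contra hc
              push_neg at hc
              exact h1 (Or.inr ⟨h, hc⟩)
            exact lt_max_iff.mpr (Or.inr (lt_of_le_of_ne h' (Ne.symm e4)))
        exact lt_min d1 d2
      rcases hfin.toFinset.eq_empty_or_nonempty with ht | ht
      · exact ⟨1, one_pos, fun s' hs' => absurd (hfin.mem_toFinset.mpr hs') (by simp [ht])⟩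
      · set G : ℝ × ℝ → ℝ := fun s' => min (max (pdist p.1 s'.1) (pdist p.2 s'.2))
          (max (pdist p.1 s'.2) (pdist p.2 s'.1)) with hG
        have hδm : δ < hfin.toFinset.inf' ht G :=
          (Finset.lt_inf'_iff ht).mpr fun s' hs' => hstrict s' (hfin.mem_toFinset.mp hs')
        refine ⟨(hfin.toFinset.inf' ht G - δ)/2, by linarith, fun s' hs' => ?_⟩
        have hle : hfin.toFinset.inf' ht G ≤ G s' :=
          Finset.inf'_le G (hfin.mem_toFinset.mpr hs')
        have h2 : δ + 2*((hfin.toFinset.inf' ht G - δ)/2) = hfin.toFinset.inf' ht G := by ring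
        rw [h2]
        exact ⟨le_max_iff.mp (hle.trans (min_le_left _ _)),
          le_max_iff.mp (hle.trans (min_le_right _ _))⟩
    obtain ⟨ε, hε, hmarg⟩ := hmargin
    have hnotY : ∀ᶠ k in Filter.atTop, p ∉ Ydel δ (Γs k) := by
      filter_upwards [hsconv ε hε] with k hk
      rintro ⟨sk, hskS, hcase⟩
      obtain ⟨s', hs'S, hclose⟩ := hk sk hskS
      have H := hmarg s' hs'S
      rcases hcase with ⟨c1, c2⟩ | ⟨c1, c2⟩ <;> rcases hclose with ⟨d1, d2⟩ | ⟨d1, d2⟩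
      · have t1 := pdist_triangle p.1 sk.1 s'.1
        have t2 := pdist_triangle p.2 sk.2 s'.2
        rcases H.1 with h | h <;> linarith
      · have t1 := pdist_triangle p.1 sk.1 s'.2
        have t2 := pdist_triangle p.2 sk.2 s'.1
        rcases H.2 with h | h <;> linarith
      · have t1 := pdist_triangle p.1 sk.2 s'.2
        have t2 := pdist_triangle p.2 sk.1 s'.1
        rcases H.2 with h | h <;> linarith
      · have t1 := pdist_triangle p.1 sk.2 s'.1
        have t2 := pdist_triangle p.2 sk.1 s'.2
        rcases H.1 with h | h <;> linarith
    have hgk : ∀ᶠ k in Filter.atTop,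
        ((D \ Ydel δ (Γs k)).indicator (tpInt q (Γs k))) p = tpInt q (Γs k) p :=
      hnotY.mono fun k hk => Set.indicator_of_mem ((Set.mem_diff p).mpr ⟨hpD.1, hk⟩) _
    have htd : Filter.Tendsto (fun k => tpInt q (Γs k) p) Filter.atTop
        (nhds (tpInt q γ p)) := by
      have ha := hconv.tendsto_at p.1
      have hb := hconv.tendsto_at p.2
      have hv := hconv'.tendsto_at p.1
      have hw : Filter.Tendsto (fun k => Γs k p.2 - Γs k p.1) Filter.atTop
          (nhds (γ p.2 - γ p.1)) := hb.sub ha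
      have hi : Filter.Tendsto
          (fun k => (inner ℝ (Γs k p.2 - Γs k p.1) (deriv (Γs k) p.1) : ℝ)) Filter.atTop
          (nhds (inner ℝ (γ p.2 - γ p.1) (deriv γ p.1) : ℝ)) := hw.inner hv
      have hL : Filter.Tendsto (fun k =>
          ‖(Γs k p.2 - Γs k p.1) - (inner ℝ (Γs k p.2 - Γs k p.1) (deriv (Γs k) p.1) : ℝ) •
            deriv (Γs k) p.1‖) Filter.atTop
          (nhds ‖(γ p.2 - γ p.1) - (inner ℝ (γ p.2 - γ p.1) (deriv γ p.1) : ℝ) • deriv γ p.1‖) :=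
        (hw.sub (hi.smul hv)).norm
      have hDn : Filter.Tendsto (fun k => ‖Γs k p.1 - Γs k p.2‖ ^ 2) Filter.atTop
          (nhds (‖γ p.1 - γ p.2‖ ^ 2)) := ((ha.sub hb).norm).pow 2
      have hne : ‖γ p.1 - γ p.2‖ ^ 2 ≠ 0 :=
        pow_ne_zero _ (norm_ne_zero_iff.mpr (sub_ne_zero.mpr hpe))
      have hdiv := (hL.const_mul 2).div hDn hne
      have hr := ((Real.continuousAt_rpow_const _ q (Or.inr hq0.le)).tendsto).comp hdiv
      have hofc := (ENNReal.continuous_ofReal.tendsto _).comp hr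
      have hrwk : (fun k => tpInt q (Γs k) p) = fun k => ENNReal.ofReal
          ((2 * ‖(Γs k p.2 - Γs k p.1) -
            (inner ℝ (Γs k p.2 - Γs k p.1) (deriv (Γs k) p.1) : ℝ) • deriv (Γs k) p.1‖ /
            ‖Γs k p.1 - Γs k p.2‖ ^ 2) ^ q) := funext fun k => tpInt_eq q (Γs k) (hunitk k) p
      rw [hrwk, tpInt_eq q γ hunit p]
      exact hofc
    rw [Filter.liminf_congr hgk]
    exact htd.liminf_eq.ge
  -- Fatou
  have hDmeas : MeasurableSet D := measurableSet_Ico.prod measurableSet_Ico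
  have hmeas : ∀ (g : ℝ → E2), ContDiff ℝ 1 g → (∀ t, ‖deriv g t‖ = 1) →
      Measurable ((D \ Ydel δ g).indicator (tpInt q g)) := fun g h1 h2 =>
    (tpInt_measurable q hq0.le g h1 h2).indicator (hDmeas.diff (Ydel_isOpen δ g).measurableSet)
  calc TP q δ γ = ∫⁻ p, (D \ Ydel δ γ).indicator (tpInt q γ) p :=
        (lintegral_indicator (hDmeas.diff (Ydel_isOpen δ γ).measurableSet) _).symm
    _ ≤ ∫⁻ p, Filter.liminf
          (fun k => ((D \ Ydel δ (Γs k)).indicator (tpInt q (Γs k))) p) Filter.atTop :=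
        lintegral_mono_ae hae
    _ ≤ Filter.liminf
          (fun k => ∫⁻ p, ((D \ Ydel δ (Γs k)).indicator (tpInt q (Γs k))) p) Filter.atTop :=
        lintegral_liminf_le' fun k => (hmeas (Γs k) (hgenk k).2.1 (hunitk k)).aemeasurable
    _ = Filter.atTop.liminf fun k => TP q δ (Γs k) := by
        refine Filter.liminf_congr (Filter.Eventually.of_forall fun k => ?_)
        exact lintegral_indicator (hDmeas.diff (Ydel_isOpen δ (Γs k)).measurableSet) _


end
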